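/- Let X be a compact Hausdorff topological space with a continuous right action of B, let M be a minimal set for the horocycle flow on X, and let t₀ > 0 satisfy g_{t₀}(M) = M. Then the union ⋃_{t∈ℝ} g_t(M) equals ⋃_{t∈[0,t₀]} g_t(M), and this set is a closed subset of X invariant under the right action of B. -/

import Mathlib

open Matrix Real
open scoped MatrixGroups UpperHalfPlane

/-- The diagonal matrix `d(t)` generating the geodesic flow. -/
noncomputable def dMat (t : ℝ) : SL(2, ℝ) :=
  ⟨!![Real.exp (t / 2), 0; 0, Real.exp (-(t / 2))], by
    simp [Matrix.det_fin_two_of, ← Real.exp_add]⟩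

/-- The unipotent matrix `u(s)` generating the horocycle flow. -/
noncomputable def uMat (s : ℝ) : SL(2, ℝ) :=
  ⟨!![1, s; 0, 1], by simp [Matrix.det_fin_two_of]⟩

/-- The upper-triangular subgroup `B` of `SL(2,ℝ)` with positive diagonal. -/
def Bsub : Subgroup SL(2, ℝ) where
  carrier := {g | g.1 1 0 = 0 ∧ 0 < g.1 0 0}
  one_mem' := by norm_num
  mul_mem' := by
    rintro a b ⟨ha0, ha1⟩ ⟨hb0, hb1⟩
    constructor
    · show (a * b).1 1 0 = 0
      rw [Matrix.SpecialLinearGroup.coe_mul, Matrix.mul_apply, Fin.sum_univ_two, ha0, hb0]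
      ring
    · show 0 < (a * b).1 0 0
      rw [Matrix.SpecialLinearGroup.coe_mul, Matrix.mul_apply, Fin.sum_univ_two, hb0]
      simpa using mul_pos ha1 hb1
  inv_mem' := by
    rintro a ⟨ha0, ha1⟩
    have hdet := a.2
    rw [Matrix.det_fin_two, ha0] at hdet
    constructor
    · show (a⁻¹).1 1 0 = 0
      rw [Matrix.SpecialLinearGroup.SL2_inv_expl]
      simp [ha0]
    · show 0 < (a⁻¹).1 0 0
      rw [Matrix.SpecialLinearGroup.SL2_inv_expl]
      simp only [Matrix.SpecialLinearGroup.coe_mk]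
      show 0 < a.1 1 1
      nlinarith

theorem dMat_mem_B (t : ℝ) : dMat t ∈ Bsub := by
  constructor
  · show (dMat t).1 1 0 = 0
    simp [dMat]
  · show 0 < (dMat t).1 0 0
    simp [dMat, Real.exp_pos]

theorem uMat_mem_B (s : ℝ) : uMat s ∈ Bsub := by
  constructor
  · show (uMat s).1 1 0 = 0
    simp [uMat]
  · show 0 < (uMat s).1 0 0
    simp [uMat]

/-- The matrix topology on `SL(2,ℝ)`, induced from the space of matrices. -/
instance : TopologicalSpace SL(2, ℝ) :=
  TopologicalSpace.induced (fun g => (g : Matrix (Fin 2) (Fin 2) ℝ)) inferInstance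

/-- `d(t)` as an element of the subgroup `B`. -/
noncomputable def dB (t : ℝ) : Bsub := ⟨dMat t, dMat_mem_B t⟩

/-- `u(s)` as an element of the subgroup `B`. -/
noncomputable def uB (s : ℝ) : Bsub := ⟨uMat s, uMat_mem_B s⟩

section

variable {X : Type*} [TopologicalSpace X]

/-- `M` is a minimal set for the horocycle flow: nonempty, closed, invariant under the
horocycle flow, and properly containing no nonempty closed invariant subset. -/
def IsMinimalHoro (act : X → Bsub → X) (M : Set X) : Prop :=
  M.Nonempty ∧ IsClosed M ∧ (∀ s : ℝ, (fun x => act x (uB s)) '' M = M) ∧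
    ∀ M' : Set X, M' ⊆ M → M'.Nonempty → IsClosed M' →
      (∀ s : ℝ, (fun x => act x (uB s)) '' M' = M') → M' = M

end


theorem dMat_mul (t t' : ℝ) : dMat t * dMat t' = dMat (t + t') := by
  ext i j
  simp only [Matrix.SpecialLinearGroup.coe_mul]
  fin_cases i <;> fin_cases j <;>
    simp [dMat, Matrix.mul_apply, Fin.sum_univ_two, ← Real.exp_add] <;> ring_nf

theorem dMat_zero : dMat 0 = 1 := by
  ext i j
  fin_cases i <;> fin_cases j <;> simp [dMat]

theorem dMat_comm (τ s : ℝ) : dMat τ * uMat s = uMat (s * Real.exp τ) * dMat τ := by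
  ext i j
  simp only [Matrix.SpecialLinearGroup.coe_mul]
  fin_cases i <;> fin_cases j <;>
    simp [dMat, uMat, Matrix.mul_apply, Fin.sum_univ_two, ← Real.exp_add]
  rw [mul_comm (Real.exp (τ/2)) s, mul_assoc, ← Real.exp_add]
  ring_nf

theorem B_decomp (g : SL(2,ℝ)) (h0 : g.1 1 0 = 0) (h1 : 0 < g.1 0 0) :
    ∃ t s : ℝ, g = dMat t * uMat s := by
  refine ⟨2 * Real.log (g.1 0 0), g.1 0 1 / g.1 0 0, ?_⟩
  have hdet := g.2
  rw [Matrix.det_fin_two, h0] at hdet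
  have he : Real.exp (Real.log (g.1 0 0)) = g.1 0 0 := Real.exp_log h1
  ext i j
  simp only [Matrix.SpecialLinearGroup.coe_mul]
  fin_cases i <;> fin_cases j <;>
    simp [dMat, uMat, Matrix.mul_apply, Fin.sum_univ_two, h0]
  · exact he.symm
  · rw [he]; field_simp
  · rw [Real.exp_neg, he]
    field_simp
    nlinarith

theorem dMat_cont : Continuous dMat := by
  rw [continuous_induced_rng]
  show Continuous fun t =>
    (!![Real.exp (t / 2), 0; 0, Real.exp (-(t / 2))] : Matrix (Fin 2) (Fin 2) ℝ)
  apply continuous_matrix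
  intro i j
  fin_cases i <;> fin_cases j <;> simp <;> fun_prop

theorem dB_mul (t t' : ℝ) : dB t * dB t' = dB (t + t') := Subtype.ext (dMat_mul t t')

theorem dB_zero : dB 0 = 1 := Subtype.ext dMat_zero

theorem dB_comm (τ s : ℝ) : dB τ * uB s = uB (s * Real.exp τ) * dB τ :=
  Subtype.ext (dMat_comm τ s)

theorem dB_cont : Continuous dB := Continuous.subtype_mk dMat_cont _

theorem B_decomp' (g : Bsub) : ∃ t s : ℝ, g = dB t * uB s := by
  obtain ⟨t, s, h⟩ := B_decomp g.1 g.2.1 g.2.2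
  exact ⟨t, s, Subtype.ext h⟩

/-- Let `X` be a compact Hausdorff space with a continuous right action of `B`,
let `M` be a minimal set for the horocycle flow and let `t₀ > 0` satisfy `g_{t₀}(M) = M`. Then
`⋃_{t ∈ ℝ} g_t(M) = ⋃_{t ∈ [0,t₀]} g_t(M)`, and this set is closed and invariant under the
right `B`-action. -/
theorem geodesic_saturation_of_periodic_minimal_set
    {X : Type*} [TopologicalSpace X] [CompactSpace X] [T2Space X]
    (act : X → Bsub → X)
    (act_one : ∀ x : X, act x 1 = x)
    (act_mul : ∀ (x : X) (g h : Bsub), act (act x g) h = act x (g * h))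
    (act_cont : Continuous fun p : X × Bsub => act p.1 p.2)
    (M : Set X) (hM : IsMinimalHoro act M)
    (t₀ : ℝ) (ht₀ : 0 < t₀)
    (hfix : (fun x => act x (dB t₀)) '' M = M) :
    (⋃ t : ℝ, (fun x => act x (dB t)) '' M) =
        (⋃ t ∈ Set.Icc (0 : ℝ) t₀, (fun x => act x (dB t)) '' M) ∧
      IsClosed (⋃ t : ℝ, (fun x => act x (dB t)) '' M) ∧
      ∀ g : Bsub, (fun x => act x g) '' (⋃ t : ℝ, (fun x => act x (dB t)) '' M) =
        ⋃ t : ℝ, (fun x => act x (dB t)) '' M := by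
  -- basic image composition lemmas
  have himg : ∀ t t' : ℝ, (fun x => act x (dB t')) '' ((fun x => act x (dB t)) '' M) =
      (fun x => act x (dB (t + t'))) '' M := by
    intro t t'
    rw [Set.image_image]
    simp only [act_mul, dB_mul]
  have hU : ∀ τ s : ℝ, (fun x => act x (uB s)) '' ((fun x => act x (dB τ)) '' M) =
      (fun x => act x (dB τ)) '' M := by
    intro τ s
    rw [Set.image_image]
    have hcomm : ∀ x : X, act (act x (dB τ)) (uB s)
        = act (act x (uB (s * Real.exp τ))) (dB τ) := by
      intro x; rw [act_mul, act_mul, dB_comm]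
    simp only [hcomm]
    calc (fun a => act (act a (uB (s * Real.exp τ))) (dB τ)) '' M
        = (fun x => act x (dB τ)) '' ((fun x => act x (uB (s * Real.exp τ))) '' M) :=
          (Set.image_image (fun x => act x (dB τ))
            (fun x => act x (uB (s * Real.exp τ))) M).symm
      _ = (fun x => act x (dB τ)) '' M := by rw [hM.2.2.1]
  have hfix' : (fun x => act x (dB (-t₀))) '' M = M := by
    conv_lhs => rw [← hfix, himg]
    simp [dB_zero, act_one]
  have hper : ∀ n : ℤ, (fun x => act x (dB (n * t₀))) '' M = M := by
    intro n
    induction n using Int.induction_on with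
    | zero => simp [dB_zero, act_one]
    | succ n ih =>
        have e : (((n : ℤ) + 1 : ℤ) : ℝ) * t₀ = (n : ℤ) * t₀ + t₀ := by push_cast; ring
        rw [e, ← himg, ih, hfix]
    | pred n ih =>
        have e : ((-(n : ℤ) - 1 : ℤ) : ℝ) * t₀ = (-(n : ℤ) : ℤ) * t₀ + (-t₀) := by
          push_cast; ring
        rw [e, ← himg, ih, hfix']
  have heq : (⋃ t : ℝ, (fun x => act x (dB t)) '' M) =
      ⋃ t ∈ Set.Icc (0 : ℝ) t₀, (fun x => act x (dB t)) '' M := by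
    apply Set.Subset.antisymm
    · intro x hx
      rw [Set.mem_iUnion] at hx
      obtain ⟨t, hx⟩ := hx
      set n : ℤ := ⌊t / t₀⌋ with hn
      have h1 : (n : ℝ) ≤ t / t₀ := Int.floor_le _
      have h2 : t / t₀ < n + 1 := Int.lt_floor_add_one _
      have ht1 : (0 : ℝ) ≤ t - n * t₀ := by
        have := mul_le_mul_of_nonneg_right h1 ht₀.le
        rw [div_mul_cancel₀ _ ht₀.ne'] at this
        linarith
      have ht2 : t - n * t₀ ≤ t₀ := by
        have := mul_le_mul_of_nonneg_right h2.le ht₀.le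
        rw [div_mul_cancel₀ _ ht₀.ne'] at this
        nlinarith
      have hkey : (fun x => act x (dB t)) '' M = (fun x => act x (dB (t - n * t₀))) '' M := by
        conv_lhs => rw [show (t : ℝ) = (n : ℝ) * t₀ + (t - n * t₀) by ring]
        rw [← himg, hper n]
      rw [hkey] at hx
      exact Set.mem_biUnion ⟨ht1, ht2⟩ hx
    · intro x hx
      rw [Set.mem_iUnion₂] at hx
      obtain ⟨t, _, hx⟩ := hx
      exact Set.mem_iUnion.2 ⟨t, hx⟩
  refine ⟨heq, ?_, ?_⟩
  · rw [heq]
    have himage : (⋃ t ∈ Set.Icc (0 : ℝ) t₀, (fun x => act x (dB t)) '' M) =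
        (fun p : ℝ × X => act p.2 (dB p.1)) '' (Set.Icc (0 : ℝ) t₀ ×ˢ M) := by
      ext x
      simp only [Set.mem_iUnion, Set.mem_image, Set.mem_prod, Prod.exists]
      constructor
      · rintro ⟨t, ht, y, hy, rfl⟩
        exact ⟨t, y, ⟨ht, hy⟩, rfl⟩
      · rintro ⟨t, y, ⟨ht, hy⟩, rfl⟩
        exact ⟨t, ht, y, hy, rfl⟩
    rw [himage]
    have hcont : Continuous fun p : ℝ × X => act p.2 (dB p.1) :=
      act_cont.comp (continuous_snd.prodMk (dB_cont.comp continuous_fst))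
    exact ((isCompact_Icc.prod (hM.2.1.isCompact)).image hcont).isClosed
  · intro g
    obtain ⟨t', s, rfl⟩ := B_decomp' g
    rw [Set.image_iUnion]
    have hone : ∀ t : ℝ, (fun x => act x (dB t' * uB s)) '' ((fun x => act x (dB t)) '' M) =
        (fun x => act x (dB (t + t'))) '' M := by
      intro t
      have hc : ∀ x : X, act (act x (dB t)) (dB t' * uB s)
          = act (act x (dB (t + t'))) (uB s) := by
        intro x
        rw [act_mul, act_mul, ← mul_assoc, dB_mul]
      rw [Set.image_image]
      simp only [hc]
      calc (fun a => act (act a (dB (t + t'))) (uB s)) '' M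
          = (fun x => act x (uB s)) '' ((fun x => act x (dB (t + t'))) '' M) :=
            (Set.image_image (fun x => act x (uB s))
              (fun x => act x (dB (t + t'))) M).symm
        _ = (fun x => act x (dB (t + t'))) '' M := hU _ _
    simp only [hone]
    ext x
    simp only [Set.mem_iUnion]
    constructor
    · rintro ⟨t, ht⟩; exact ⟨t + t', ht⟩
    · rintro ⟨t, ht⟩
      exact ⟨t - t', by rw [show t - t' + t' = t by ring]; exact ht⟩
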